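/- For u, u' distinct elements of V_0 = {0,1}^{n+1} \ {0,(1,…,1)} with supports I, I', the vector p_H(u) − p_H(u') lies in p_H(V_0) if and only if I ⊆ I' or I' ⊆ I; otherwise max_j (u−u')_j − min_i (u−u')_i = 2. -/

import Mathlib

open Set Filter MeasureTheory Pointwise

/-- The hyperplane `H = {x ∈ ℝ^{n+1} : ∑ xᵢ = 0}`. -/
def Hset (n : ℕ) : Set (Fin (n + 1) → ℝ) := {x | ∑ i, x i = 0}

/-- The root lattice `Aₙ = ℤ^{n+1} ∩ H`. -/
def Alat (n : ℕ) : Set (Fin (n + 1) → ℝ) :=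
  {x | (∀ i, ∃ m : ℤ, x i = (m : ℝ)) ∧ ∑ i, x i = 0}

/-- The Voronoï region of `Aₙ` inside `H`. -/
def VorAn (n : ℕ) : Set (Fin (n + 1) → ℝ) :=
  {z | z ∈ Hset n ∧ ∀ x ∈ Alat n, ∑ i, (z i) ^ 2 ≤ ∑ i, (z i - x i) ^ 2}

/-- Orthogonal projection of `ℝ^{n+1}` onto the hyperplane `H`. -/
noncomputable def pH (n : ℕ) (u : Fin (n + 1) → ℝ) : Fin (n + 1) → ℝ :=
  fun i => u i - (∑ j, u j) / (n + 1)

/-- `V₀ = {0,1}^{n+1} \ {0, (1,…,1)}`. -/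
def V0set (n : ℕ) : Set (Fin (n + 1) → ℝ) :=
  {u | (∀ i, u i = 0 ∨ u i = 1) ∧ u ≠ 0 ∧ u ≠ fun _ => 1}

/-- The vertex set of the Voronoï region of `Aₙ`. -/
noncomputable def VPAn (n : ℕ) : Set (Fin (n + 1) → ℝ) := pH n '' V0set n

lemma pH_sub (n : ℕ) (u v : Fin (n+1) → ℝ) : pH n u - pH n v = pH n (u - v) := by
  funext i
  simp [pH, Finset.sum_sub_distrib]
  ring

lemma pH_add_const (n : ℕ) (v : Fin (n+1) → ℝ) (c : ℝ) :
    pH n (fun i => v i + c) = pH n v := by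
  funext i
  have h : ∑ j, (v j + c) = (∑ j, v j) + ((n:ℝ)+1) * c := by
    rw [Finset.sum_add_distrib, Finset.sum_const, Finset.card_univ]
    simp
  have hn : ((n:ℝ)+1) ≠ 0 := by positivity
  simp only [pH, h]
  field_simp
  ring

lemma pH_eq_const (n : ℕ) (x y : Fin (n+1) → ℝ) (h : pH n x = pH n y) (i j : Fin (n+1)) :
    x i - y i = x j - y j := by
  have hi := congrFun h i
  have hj := congrFun h j
  simp only [pH] at hi hj
  linarith

theorem diff_of_vertices_An_iff_nested_supports (n : ℕ) (u u' : Fin (n + 1) → ℝ)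
    (hu : u ∈ V0set n) (hu' : u' ∈ V0set n) (hne : u ≠ u') :
    (pH n u - pH n u' ∈ VPAn n ↔
      ({i | u i = 1} ⊆ {i | u' i = 1} ∨ {i | u' i = 1} ⊆ {i | u i = 1})) ∧
    (¬ ({i | u i = 1} ⊆ {i | u' i = 1} ∨ {i | u' i = 1} ⊆ {i | u i = 1}) →
      (⨆ i, (u - u') i) - (⨅ i, (u - u') i) = 2) := by
  obtain ⟨hu01, hu0, hu1⟩ := hu
  obtain ⟨hu'01, hu'0, hu'1⟩ := hu'
  constructor
  · constructor
    · -- membership → nested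
      rintro ⟨w, ⟨hw01, hw0, hw1⟩, hw⟩
      rw [pH_sub] at hw
      obtain ⟨i1, hi1⟩ := Function.ne_iff.mp hw0
      obtain ⟨j1, hj1⟩ := Function.ne_iff.mp hw1
      have hwi1 : w i1 = 1 := (hw01 i1).resolve_left (by simpa using hi1)
      have hwj1 : w j1 = 0 := (hw01 j1).resolve_right hj1
      have hconst : ∀ k, u k - u' k - w k = u j1 - u' j1 := by
        intro k
        have h := pH_eq_const n w (u - u') hw k j1
        simp only [Pi.sub_apply] at h
        rw [hwj1] at h
        linarith
      have hci : u i1 - u' i1 = 1 + (u j1 - u' j1) := by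
        have := hconst i1; rw [hwi1] at this; linarith
      have hcases : u j1 - u' j1 = 0 ∨ u j1 - u' j1 = -1 := by
        rcases hu01 i1 with h1 | h1 <;> rcases hu'01 i1 with h2 | h2 <;>
          rcases hu01 j1 with h3 | h3 <;> rcases hu'01 j1 with h4 | h4 <;>
          rw [h1, h2, h3, h4] at hci <;> rw [h3, h4] <;> revert hci <;> norm_num
      rcases hcases with hc0 | hcm1
      · right
        intro k hk
        simp only [Set.mem_setOf_eq] at hk ⊢
        have hck := hconst k
        rw [hc0] at hck
        rcases hw01 k with hwk | hwk <;> rcases hu01 k with huk | huk <;>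
          rw [hwk, hk] at hck <;> first | exact huk | linarith
      · left
        intro k hk
        simp only [Set.mem_setOf_eq] at hk ⊢
        have hck := hconst k
        rw [hcm1] at hck
        rcases hw01 k with hwk | hwk <;> rcases hu'01 k with huk | huk <;>
          rw [hwk, hk] at hck <;> first | exact huk | linarith
    · -- nested → membership
      rintro (hsub | hsub)
      · -- {u = 1} ⊆ {u' = 1} : take w = u - u' + 1
        refine ⟨fun i => u i - u' i + 1, ⟨?_, ?_, ?_⟩, ?_⟩
        · intro i
          rcases hu01 i with h1 | h1
          · rcases hu'01 i with h2 | h2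
            · right; simp [h1, h2]
            · left; simp [h1, h2]
          · have h2 : u' i = 1 := hsub h1
            right; simp [h1, h2]
        · intro h
          apply hu0
          funext i
          have hi := congrFun h i
          simp only [Pi.zero_apply] at hi ⊢
          rcases hu01 i with h1 | h1
          · exact h1
          · rcases hu'01 i with h2 | h2 <;> rw [h1, h2] at hi <;> norm_num at hi
        · intro h
          apply hne
          funext i
          have hi := congrFun h i
          linarith
        · rw [pH_sub]
          have he : (fun i => u i - u' i + 1) = fun i => (u - u') i + 1 := by
            funext i; simp
          rw [he, pH_add_const]
      · -- {u' = 1} ⊆ {u = 1} : take w = u - u'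
        refine ⟨u - u', ⟨?_, ?_, ?_⟩, (pH_sub n u u').symm⟩
        · intro i
          simp only [Pi.sub_apply]
          rcases hu01 i with h1 | h1
          · have h2 : u' i = 0 := by
              rcases hu'01 i with h2 | h2
              · exact h2
              · have := hsub h2
                simp only [Set.mem_setOf_eq, h1] at this
                norm_num at this
            left; rw [h1, h2]; ring
          · rcases hu'01 i with h2 | h2
            · right; rw [h1, h2]; ring
            · left; rw [h1, h2]; ring
        · intro h
          exact hne (sub_eq_zero.mp h)
        · intro h
          apply hu1
          funext i
          have hi := congrFun h i
          simp only [Pi.sub_apply] at hi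
          rcases hu01 i with h1 | h1
          · rcases hu'01 i with h2 | h2 <;> rw [h1, h2] at hi <;> norm_num at hi
          · exact h1
  · -- not nested → sup - inf = 2
    intro hnot
    push_neg at hnot
    obtain ⟨h1, h2⟩ := hnot
    obtain ⟨i, hiu, hiu'⟩ := Set.not_subset.mp h1
    obtain ⟨j, hju', hju⟩ := Set.not_subset.mp h2
    simp only [Set.mem_setOf_eq] at hiu hiu' hju hju'
    have hiu'0 : u' i = 0 := (hu'01 i).resolve_right hiu'
    have hju0 : u j = 0 := (hu01 j).resolve_right hju
    have hbdd : ∀ k, -1 ≤ (u - u') k ∧ (u - u') k ≤ 1 := by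
      intro k
      simp only [Pi.sub_apply]
      rcases hu01 k with h | h <;> rcases hu'01 k with h' | h' <;> rw [h, h'] <;> norm_num
    have hsup : (⨆ k, (u - u') k) = 1 := by
      apply le_antisymm
      · exact ciSup_le fun k => (hbdd k).2
      · have hv : (u - u') i = 1 := by simp [hiu, hiu'0]
        calc (1:ℝ) = (u - u') i := hv.symm
        _ ≤ ⨆ k, (u - u') k := le_ciSup (Set.Finite.bddAbove (Set.finite_range _)) i
    have hinf : (⨅ k, (u - u') k) = -1 := by
      apply le_antisymm
      · have hv : (u - u') j = -1 := by simp [hju0, hju']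
        calc (⨅ k, (u - u') k) ≤ (u - u') j :=
              ciInf_le (Set.Finite.bddBelow (Set.finite_range _)) j
        _ = -1 := hv
      · exact le_ciInf fun k => (hbdd k).1
    rw [hsup, hinf]
    norm_num
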